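/- Let h(x,κ) = N diag(κ) x^B be the mass-action vector field of a reaction network. A set of indices {i_1,…,i_u} (u < n) is an LTC index set for all κ ∈ ℝ^m_{>0} (i.e., h(x,κ) = 0 for all κ > 0 whenever x_{i_1} = ⋯ = x_{i_u} = 0) if and only if x^{Y*} = 0 whenever x_{i_1} = ⋯ = x_{i_u} = 0, where Y* is the matrix of reactant complexes. -/

import Mathlib

open Matrix

/-- Characterization of LTC index sets: for the mass-action vector field
h(x,κ)_i = ∑_r N_{ir} κ_r x^{B_r}, an index set I (with |I| < n) is an LTC index set
for all κ ∈ ℝ^m_{>0} (i.e. h(x,κ) = 0 for all κ > 0 whenever x_i = 0 for i ∈ I)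
if and only if all reactant monomials x^{Y*} vanish whenever x_i = 0 for i ∈ I.
The network has no self-edges, so the stoichiometric matrix N has no zero column. -/
theorem LTC_iff_reactant_monomials_vanish {n m : ℕ}
    (N : Matrix (Fin n) (Fin m) ℝ) (B : Matrix (Fin n) (Fin m) ℕ)
    (hN : ∀ r, ∃ i, N i r ≠ 0)
    (I : Finset (Fin n)) (hI : I.card < n) :
    (∀ κ : Fin m → ℝ, (∀ r, 0 < κ r) → ∀ x : Fin n → ℝ, (∀ s, 0 ≤ x s) →
        (∀ k ∈ I, x k = 0) → ∀ i, ∑ r, N i r * κ r * ∏ s, x s ^ B s r = 0) ↔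
    (∀ x : Fin n → ℝ, (∀ s, 0 ≤ x s) → (∀ k ∈ I, x k = 0) →
        ∀ r, ∏ s, x s ^ B s r = 0) := by
  constructor
  · intro h x hx hxI r0
    obtain ⟨i, hi⟩ := hN r0
    have h1 := h (fun _ => 1) (fun _ => one_pos) x hx hxI i
    have h2 := h (fun r => if r = r0 then 2 else 1)
      (fun r => by split <;> norm_num) x hx hxI i
    have key : N i r0 * ∏ s, x s ^ B s r0 = 0 := by
      have := sub_eq_zero_of_eq (h2.trans h1.symm)
      rw [← Finset.sum_sub_distrib] at this
      have e : ∀ r ∈ Finset.univ, (N i r * (if r = r0 then (2:ℝ) else 1) * ∏ s, x s ^ B s r)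
          - N i r * 1 * ∏ s, x s ^ B s r
          = if r = r0 then N i r0 * ∏ s, x s ^ B s r0 else 0 := by
        intro r _
        by_cases hr : r = r0 <;> simp [hr] <;> ring
      rw [Finset.sum_congr rfl e, Finset.sum_ite_eq' Finset.univ r0] at this
      simpa using this
    exact (mul_eq_zero.mp key).resolve_left hi
  · intro h κ hκ x hx hxI i
    refine Finset.sum_eq_zero fun r _ => ?_
    rw [h x hx hxI r, mul_zero]
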